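/- Let α ∈ [0,1), b > 0, and define g(z) = (1−α²)(1/b + b z²)/(1 − 2αz + z²) for z ∈ ℝ (with 1 − 2αz + z² > 0). Then g has exactly two critical points z_± = (b − 1/b ± √((b−1/b)² + 4α²))/(2αb) (for α > 0), with z_− < 0 < z_+; g attains its global minimum on ℝ at z_− and its global maximum on ℝ at z_+. -/

import Mathlib

open Real

set_option maxHeartbeats 1000000 in
theorem stmt13 (α b : ℝ) (hα0 : 0 < α) (hα1 : α < 1) (hb : 0 < b) :
    let g : ℝ → ℝ := fun z => (1 - α ^ 2) * (1 / b + b * z ^ 2) / (1 - 2 * α * z + z ^ 2)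
    let zm : ℝ := (b - 1 / b - Real.sqrt ((b - 1 / b) ^ 2 + 4 * α ^ 2)) / (2 * α * b)
    let zp : ℝ := (b - 1 / b + Real.sqrt ((b - 1 / b) ^ 2 + 4 * α ^ 2)) / (2 * α * b)
    (∀ z : ℝ, deriv g z = 0 ↔ z = zm ∨ z = zp) ∧
    zm < 0 ∧ 0 < zp ∧
    (∀ z : ℝ, g zm ≤ g z) ∧ (∀ z : ℝ, g z ≤ g zp) := by
  intro g zm zp
  have hb' : b ≠ 0 := ne_of_gt hb
  have hα' : α ≠ 0 := ne_of_gt hα0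
  have h1a : 0 < 1 - α ^ 2 := by nlinarith
  have hzm : zm = (b - 1 / b - Real.sqrt ((b - 1 / b) ^ 2 + 4 * α ^ 2)) / (2 * α * b) := rfl
  have hzp : zp = (b - 1 / b + Real.sqrt ((b - 1 / b) ^ 2 + 4 * α ^ 2)) / (2 * α * b) := rfl
  have hg : ∀ w : ℝ, g w = (1 - α ^ 2) * (1 / b + b * w ^ 2) / (1 - 2 * α * w + w ^ 2) :=
    fun _ => rfl
  set s : ℝ := Real.sqrt ((b - 1 / b) ^ 2 + 4 * α ^ 2) with hsdef
  have hs2 : s ^ 2 = (b - 1 / b) ^ 2 + 4 * α ^ 2 := Real.sq_sqrt (by positivity)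
  have hs0 : 0 < s := Real.sqrt_pos.mpr (by positivity)
  have hc : b * (1 / b) = 1 := by field_simp
  have hD : ∀ z : ℝ, 0 < 1 - 2 * α * z + z ^ 2 := by
    intro z
    nlinarith [sq_nonneg (z - α), sq_nonneg α]
  have e1 : 2 * α * b * zm = (b - 1 / b) - s := by
    rw [hzm]; field_simp
  have e2 : 2 * α * b * zp = (b - 1 / b) + s := by
    rw [hzp]; field_simp
  have h2ab : (2 * α * b) ≠ 0 := by positivity
  -- s > |b - 1/b|
  have hsgt1 : b - 1 / b < s := by nlinarith [hs2, hs0]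
  have hsgt2 : -s < b - 1 / b := by nlinarith [hs2, hs0]
  have hzm0 : zm < 0 := by
    have h : 2 * α * b * zm < 0 := by rw [e1]; linarith
    nlinarith [mul_pos (mul_pos (by linarith : (0:ℝ) < 2 * α) hb) hb]
  have hzp0 : 0 < zp := by
    have h : 0 < 2 * α * b * zp := by rw [e2]; linarith
    nlinarith [mul_pos (mul_pos (by linarith : (0:ℝ) < 2 * α) hb) hb]
  -- derivative formula
  have hderiv : ∀ z : ℝ, deriv g z =
      ((1 - α ^ 2) * (b * (2 * z)) * (1 - 2 * α * z + z ^ 2) -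
        (1 - α ^ 2) * (1 / b + b * z ^ 2) * (2 * z - 2 * α)) / (1 - 2 * α * z + z ^ 2) ^ 2 := by
    intro z
    have h1 : HasDerivAt (fun w : ℝ => w ^ 2) (2 * z) z := by
      simpa using hasDerivAt_pow 2 z
    have hnum : HasDerivAt (fun w : ℝ => (1 - α ^ 2) * (1 / b + b * w ^ 2))
        ((1 - α ^ 2) * (b * (2 * z))) z := ((h1.const_mul b).const_add (1 / b)).const_mul _
    have hden : HasDerivAt (fun w : ℝ => 1 - 2 * α * w + w ^ 2) (2 * z - 2 * α) z := by
      have h2 : HasDerivAt (fun w : ℝ => 1 - 2 * α * w) (-(2 * α)) z := by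
        simpa using ((hasDerivAt_id z).const_mul (2 * α)).const_sub 1
      have h3 : HasDerivAt (fun w : ℝ => 1 - 2 * α * w + w ^ 2) (-(2 * α) + 2 * z) z := h2.add h1
      convert h3 using 1 <;> ring
    exact (hnum.div hden (hD z).ne').deriv
  -- factorization of the derivative numerator
  have hfac : ∀ z : ℝ, b * (2 * z) * (1 - 2 * α * z + z ^ 2) -
      (1 / b + b * z ^ 2) * (2 * z - 2 * α) =
      -(2 * α * b) * ((z - zm) * (z - zp)) := by
    intro z
    apply mul_left_cancel₀ h2ab
    linear_combination (-(2 * α * b * z) + 2 * α * b * zp) * e1 +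
      (-(2 * α * b * z) + (b - 1 / b) - s) * e2 - hs2 + 4 * α ^ 2 * hc
  -- min identity
  have hQm : ∀ z : ℝ, (1 / b + b * z ^ 2) * (1 - 2 * α * zm + zm ^ 2) -
      (1 / b + b * zm ^ 2) * (1 - 2 * α * z + z ^ 2) = s * (z - zm) ^ 2 := by
    intro z
    apply mul_left_cancel₀ h2ab
    linear_combination ((z - zm) * (-(2 * α * b * z) + (b - 1 / b) + s)) * e1 -
      (z - zm) * hs2 + (4 * α ^ 2 * (z - zm)) * hc
  -- max identity
  have hQp : ∀ z : ℝ, (1 / b + b * z ^ 2) * (1 - 2 * α * zp + zp ^ 2) -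
      (1 / b + b * zp ^ 2) * (1 - 2 * α * z + z ^ 2) = -s * (z - zp) ^ 2 := by
    intro z
    apply mul_left_cancel₀ h2ab
    linear_combination ((z - zp) * (-(2 * α * b * z) + (b - 1 / b) - s)) * e2 -
      (z - zp) * hs2 + (4 * α ^ 2 * (z - zp)) * hc
  refine ⟨?_, hzm0, hzp0, ?_, ?_⟩
  · intro z
    rw [hderiv z, div_eq_zero_iff]
    have hD2 : (1 - 2 * α * z + z ^ 2) ^ 2 ≠ 0 := pow_ne_zero 2 (hD z).ne'
    have hk : -((1 - α ^ 2) * (2 * α * b)) ≠ 0 := by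
      have : (0:ℝ) < (1 - α ^ 2) * (2 * α * b) := by positivity
      simpa using this.ne'
    have hE : (1 - α ^ 2) * (b * (2 * z)) * (1 - 2 * α * z + z ^ 2) -
        (1 - α ^ 2) * (1 / b + b * z ^ 2) * (2 * z - 2 * α) =
        -((1 - α ^ 2) * (2 * α * b)) * ((z - zm) * (z - zp)) := by
      linear_combination (1 - α ^ 2) * hfac z
    rw [hE]
    have hne1 : (1:ℝ) ≠ α ^ 2 := by nlinarith
    simp [hD2, mul_eq_zero, sub_eq_zero, hα', hb', hne1]
  · intro z
    rw [hg zm, hg z, div_le_div_iff₀ (hD zm) (hD z)]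
    have hd : 0 ≤ (1 / b + b * z ^ 2) * (1 - 2 * α * zm + zm ^ 2) -
        (1 / b + b * zm ^ 2) * (1 - 2 * α * z + z ^ 2) := by
      rw [hQm z]; positivity
    linarith [mul_nonneg h1a.le hd]
  · intro z
    rw [hg z, hg zp, div_le_div_iff₀ (hD z) (hD zp)]
    have hd : (1 / b + b * z ^ 2) * (1 - 2 * α * zp + zp ^ 2) -
        (1 / b + b * zp ^ 2) * (1 - 2 * α * z + z ^ 2) ≤ 0 := by
      rw [hQp z]; nlinarith [sq_nonneg (z - zp)]
    linarith [mul_nonneg h1a.le (neg_nonneg.mpr hd)]
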